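/- Consider the auxiliary discrete dynamics w_{t+1} = w_t + z(U_t) on ℝ² for t = 0, …, N−1 with w_0 = (0,0)ᵀ, where each U_t = (u_1^t, …, u_M^t) with u_i^t ∈ ℝ^{m_i}. If additionally w_N = (0,0)ᵀ, then z(U_t) = (0,0)ᵀ for every t ∈ {0,…,N−1}, and consequently at each time t at most one of the vectors u_1^t, …, u_M^t is nonzero. -/

import Mathlib

open scoped BigOperators

/-- The map `z` from the paper. -/
noncomputable def zmap {M : ℕ} {m : Fin M → ℕ}
    (u : ∀ i : Fin M, EuclideanSpace ℝ (Fin (m i))) : ℝ × ℝ :=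
  ∑ i : Fin M, ∑ j : Fin M,
    if i < j then
      (‖u i‖ ^ 2 * ‖u j‖ ^ 2 + (∑ k, u i k) * (∑ l, u j l),
       ‖u i‖ ^ 2 * ‖u j‖ ^ 2 - (∑ k, u i k) * (∑ l, u j l))
    else 0

lemma zmap_coord_sum {M : ℕ} {m : Fin M → ℕ}
    (u : ∀ i : Fin M, EuclideanSpace ℝ (Fin (m i))) :
    (zmap u).1 + (zmap u).2
      = ∑ i : Fin M, ∑ j : Fin M,
          if i < j then 2 * (‖u i‖ ^ 2 * ‖u j‖ ^ 2) else 0 := by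
  simp only [zmap, Prod.fst_sum, Prod.snd_sum, apply_ite Prod.fst, apply_ite Prod.snd,
    Prod.fst_zero, Prod.snd_zero, ← Finset.sum_add_distrib, ← ite_add_ite]
  congr 1; ext i; congr 1; ext j
  split <;> ring

lemma zmap_coord_sum_nonneg {M : ℕ} {m : Fin M → ℕ}
    (u : ∀ i : Fin M, EuclideanSpace ℝ (Fin (m i))) :
    0 ≤ (zmap u).1 + (zmap u).2 := by
  rw [zmap_coord_sum]
  refine Finset.sum_nonneg fun i _ => Finset.sum_nonneg fun j _ => ?_
  split
  · positivity
  · exact le_rfl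

/-- for the auxiliary dynamics `w_{t+1} = w_t + z(U_t)` with
`w_0 = w_N = (0,0)ᵀ`, we get `z(U_t) = (0,0)ᵀ` for every `t`, and at each time
at most one of the vectors `u_1^t, …, u_M^t` is nonzero. -/
theorem stmt_6 (N M : ℕ) (hN : 0 < N) (hM : 0 < M) (m : Fin M → ℕ) (hm : ∀ i, 0 < m i)
    (U : ℕ → ∀ i : Fin M, EuclideanSpace ℝ (Fin (m i)))
    (w : ℕ → ℝ × ℝ)
    (hw0 : w 0 = (0, 0))
    (hdyn : ∀ t < N, w (t + 1) = w t + zmap (U t))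
    (hwN : w N = (0, 0)) :
    ∀ t < N, zmap (U t) = (0, 0) ∧
      ∀ i j : Fin M, U t i ≠ 0 → U t j ≠ 0 → i = j := by
  -- telescoping: w n = ∑_{t<n} zmap (U t) for n ≤ N
  have htel : ∀ n, n ≤ N → w n = ∑ t ∈ Finset.range n, zmap (U t) := by
    intro n
    induction n with
    | zero => intro _; simp only [Finset.range_zero, Finset.sum_empty]; exact hw0
    | succ k ih =>
      intro hk
      rw [Finset.sum_range_succ, ← ih (Nat.le_of_succ_le hk),
        hdyn k (Nat.lt_of_succ_le hk)]
  have hsum : ∑ t ∈ Finset.range N, ((zmap (U t)).1 + (zmap (U t)).2) = 0 := by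
    have := htel N le_rfl
    rw [hwN] at this
    have h1 : (∑ t ∈ Finset.range N, zmap (U t)).1 = 0 := by rw [← this]
    have h2 : (∑ t ∈ Finset.range N, zmap (U t)).2 = 0 := by rw [← this]
    rw [Prod.fst_sum] at h1
    rw [Prod.snd_sum] at h2
    rw [Finset.sum_add_distrib, h1, h2, add_zero]
  have hzero : ∀ t < N, (zmap (U t)).1 + (zmap (U t)).2 = 0 := by
    intro t ht
    have := (Finset.sum_eq_zero_iff_of_nonneg
      (fun t _ => zmap_coord_sum_nonneg (U t))).mp hsum
    exact this t (Finset.mem_range.mpr ht)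
  intro t ht
  have hz := hzero t ht
  rw [zmap_coord_sum] at hz
  -- each pair term is zero
  have hpair : ∀ i j : Fin M, i < j → ‖U t i‖ ^ 2 * ‖U t j‖ ^ 2 = 0 := by
    intro i j hij
    have h1 := (Finset.sum_eq_zero_iff_of_nonneg
      (fun i _ => Finset.sum_nonneg fun j _ => by
        split
        · positivity
        · exact le_rfl)).mp hz i (Finset.mem_univ i)
    have h2 := (Finset.sum_eq_zero_iff_of_nonneg
      (fun j _ => by
        split
        · positivity
        · exact le_rfl)).mp h1 j (Finset.mem_univ j)
    rw [if_pos hij] at h2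
    linarith
  have hor : ∀ i j : Fin M, i < j → U t i = 0 ∨ U t j = 0 := by
    intro i j hij
    have := hpair i j hij
    rcases mul_eq_zero.mp this with h | h
    · left
      exact norm_eq_zero.mp (by nlinarith [norm_nonneg (U t i)])
    · right
      exact norm_eq_zero.mp (by nlinarith [norm_nonneg (U t j)])
  constructor
  · -- zmap (U t) = 0
    have : (0, 0) = (0 : ℝ × ℝ) := rfl
    rw [this, zmap]
    refine Finset.sum_eq_zero fun i _ => Finset.sum_eq_zero fun j _ => ?_
    split
    · rename_i hij
      rcases hor i j hij with h | h <;>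
        simp [h, Finset.sum_apply, EuclideanSpace.norm_eq] <;>
        · ext <;> simp
    · rfl
  · intro i j hi hj
    by_contra hne
    rcases lt_or_gt_of_ne hne with h | h
    · rcases hor i j h with h' | h' <;> [exact hi h'; exact hj h']
    · rcases hor j i h with h' | h' <;> [exact hj h'; exact hi h']
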